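/- arXiv:2102.11686 — 10 statements merged into one kernel-verified Lean document; each statement's English description precedes it below -/
import Mathlib

section
/- Every strategy-proof voting rule φ : Λ^n → Λ is 1-Lipschitz with respect to the L¹-norm on ℝ^n: for all profiles r, s, |φ(r) − φ(s)| ≤ ∑_i |r_i − s_i|. In particular φ is continuous. -/
/-- A strategy-proof voting rule is 1-Lipschitz for the L¹-norm,
and in particular continuous on the domain of profiles. -/
theorem sp_lipschitz_L1
    (Λ : Set ℝ) (n : ℕ) (φ : (Fin n → ℝ) → ℝ)
    (hrange : ∀ r : Fin n → ℝ, (∀ j, r j ∈ Λ) → φ r ∈ Λ)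
    (hSP : ∀ r s : Fin n → ℝ, (∀ j, r j ∈ Λ) → (∀ j, s j ∈ Λ) →
      ∀ i : Fin n, (∀ j, j ≠ i → s j = r j) →
      (φ s ≥ φ r ∧ φ r ≥ r i) ∨ (φ s ≤ φ r ∧ φ r ≤ r i)) :
    (∀ r s : Fin n → ℝ, (∀ j, r j ∈ Λ) → (∀ j, s j ∈ Λ) →
      |φ r - φ s| ≤ ∑ i, |r i - s i|) ∧
    ContinuousOn φ {r : Fin n → ℝ | ∀ j, r j ∈ Λ} := by
  -- single coordinate change bound
  have single : ∀ a b : Fin n → ℝ, (∀ j, a j ∈ Λ) → (∀ j, b j ∈ Λ) →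
      ∀ i : Fin n, (∀ j, j ≠ i → b j = a j) → |φ b - φ a| ≤ |b i - a i| := by
    intro a b ha hb i hdiff
    rcases hSP a b ha hb i hdiff with ⟨h1, h2⟩ | ⟨h1, h2⟩ <;>
      rcases hSP b a hb ha i (fun j hj => (hdiff j hj).symm) with ⟨h3, h4⟩ | ⟨h3, h4⟩ <;>
      · rw [abs_sub_le_iff]
        constructor <;>
          linarith [le_abs_self (b i - a i), le_abs_self (a i - b i),
            abs_sub_comm (b i) (a i)]
  have key : ∀ r s : Fin n → ℝ, (∀ j, r j ∈ Λ) → (∀ j, s j ∈ Λ) →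
      |φ r - φ s| ≤ ∑ i, |r i - s i| := by
    intro r s hr hs
    set hyb : ℕ → (Fin n → ℝ) := fun k j => if j.val < k then s j else r j with hhyb
    have hybmem : ∀ k j, hyb k j ∈ Λ := by
      intro k j
      by_cases h : j.val < k <;> simp [hhyb, h, hr j, hs j]
    have main : ∀ k, k ≤ n →
        |φ (hyb k) - φ r| ≤
          ∑ i ∈ Finset.univ.filter (fun i : Fin n => i.val < k), |s i - r i| := by
      intro k
      induction k with
      | zero =>
          intro _
          have : hyb 0 = r := by funext j; simp [hhyb]
          simp [this]
      | succ k ih =>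
          intro hk
          have hk' : k < n := hk
          set i : Fin n := ⟨k, hk'⟩ with hi
          have hdiff : ∀ j, j ≠ i → hyb (k+1) j = hyb k j := by
            intro j hj
            have hjv : j.val ≠ k := fun h => hj (Fin.ext h)
            simp only [hhyb]
            have h2 : j.val < k + 1 ↔ j.val < k := by omega
            simp [h2]
          have h1 := single (hyb k) (hyb (k+1)) (hybmem k) (hybmem (k+1)) i hdiff
          have hvals : hyb (k+1) i = s i ∧ hyb k i = r i := by
            constructor <;> simp [hhyb, hi]
          rw [hvals.1, hvals.2] at h1
          have hfilter : Finset.univ.filter (fun j : Fin n => j.val < k + 1) =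
              insert i (Finset.univ.filter (fun j : Fin n => j.val < k)) := by
            ext j
            simp only [Finset.mem_filter, Finset.mem_insert, Finset.mem_univ, true_and]
            constructor
            · intro h
              by_cases hjk : j.val = k
              · exact Or.inl (Fin.ext hjk)
              · exact Or.inr (by omega)
            · rintro (rfl | h)
              · simp [hi]
              · omega
          have hnotmem : i ∉ Finset.univ.filter (fun j : Fin n => j.val < k) := by
            simp [hi]
          rw [hfilter, Finset.sum_insert hnotmem]
          have := ih (le_of_lt hk')
          calc |φ (hyb (k+1)) - φ r|
              ≤ |φ (hyb (k+1)) - φ (hyb k)| + |φ (hyb k) - φ r| := abs_sub_le _ _ _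
            _ ≤ |s i - r i| + ∑ j ∈ Finset.univ.filter (fun j : Fin n => j.val < k),
                  |s j - r j| := add_le_add h1 this
    have hfin := main n le_rfl
    have h1 : hyb n = s := by funext j; simp [hhyb, j.isLt]
    have h2 : Finset.univ.filter (fun i : Fin n => i.val < n) = Finset.univ := by
      ext j; simp [j.isLt]
    rw [h1, h2] at hfin
    rw [abs_sub_comm]
    calc |φ s - φ r| ≤ ∑ i, |s i - r i| := hfin
      _ = ∑ i, |r i - s i| := by simp [abs_sub_comm]
  refine ⟨key, ?_⟩
  have hlip : LipschitzOnWith n φ {r : Fin n → ℝ | ∀ j, r j ∈ Λ} := by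
    apply LipschitzOnWith.of_dist_le_mul
    intro x hx y hy
    rw [Real.dist_eq]
    calc |φ x - φ y| ≤ ∑ i, |x i - y i| := key x y hx hy
      _ ≤ ∑ _i : Fin n, dist x y := by
          apply Finset.sum_le_sum
          intro i _
          rw [← Real.dist_eq]
          exact dist_le_pi_dist x y i
      _ = (n : ℝ) * dist x y := by simp [mul_comm]
  exact hlip.continuousOn
end

section
/- Let Λ = [μ⁻, μ⁺] ⊆ ℝ be a closed interval. A strategy-proof voting rule φ : Λ^n → Λ that takes the value μ⁻ (respectively μ⁺) at some profile all of whose coordinates lie in the open interval is constant equal to μ⁻ (resp. μ⁺). Equivalently: a strategy-proof rule φ : Λ^n → Λ with φ(r) = μ⁻ for some r with all r_i > μ⁻ satisfies φ(s) = μ⁻ for all s. -/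
/-- On Λ = [μ⁻, μ⁺], a strategy-proof rule that attains the value μ⁻
at a profile with all coordinates strictly above μ⁻ is constantly μ⁻. -/
theorem sp_extreme_value_constant
    (μm μp : ℝ) (hμ : μm ≤ μp) (n : ℕ) (φ : (Fin n → ℝ) → ℝ)
    (hrange : ∀ r : Fin n → ℝ, (∀ j, r j ∈ Set.Icc μm μp) → φ r ∈ Set.Icc μm μp)
    (hSP : ∀ r s : Fin n → ℝ, (∀ j, r j ∈ Set.Icc μm μp) → (∀ j, s j ∈ Set.Icc μm μp) →
      ∀ i : Fin n, (∀ j, j ≠ i → s j = r j) →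
      (φ s ≥ φ r ∧ φ r ≥ r i) ∨ (φ s ≤ φ r ∧ φ r ≤ r i))
    (r : Fin n → ℝ) (hr : ∀ j, r j ∈ Set.Icc μm μp) (hr' : ∀ j, μm < r j)
    (hval : φ r = μm) :
    ∀ s : Fin n → ℝ, (∀ j, s j ∈ Set.Icc μm μp) → φ s = μm := by
  intro s hs
  -- hybrid profiles: first k coordinates from s, rest from r
  set t : ℕ → Fin n → ℝ := fun k j => if (j : ℕ) < k then s j else r j with ht
  have htmem : ∀ k, ∀ j, t k j ∈ Set.Icc μm μp := by
    intro k j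
    by_cases h : (j : ℕ) < k <;> simp [ht, h, hs j, hr j]
  have key : ∀ k, φ (t k) = μm := by
    intro k
    induction k with
    | zero =>
        have : t 0 = r := by funext j; simp [ht]
        rw [this, hval]
    | succ k ih =>
        by_cases hk : k < n
        · set i : Fin n := ⟨k, hk⟩ with hi
          have hdiff : ∀ j, j ≠ i → t (k + 1) j = t k j := by
            intro j hj
            have hne : (j : ℕ) ≠ k := by
              intro h; apply hj; apply Fin.ext; simpa [hi] using h
            by_cases h : (j : ℕ) < k
            · simp [ht, h, Nat.lt_succ_of_lt h]
            · have h' : ¬ (j : ℕ) < k + 1 := by omega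
              simp [ht, h, h']
          have hti : t k i = r i := by simp [ht, hi]
          rcases hSP (t k) (t (k + 1)) (htmem k) (htmem (k + 1)) i hdiff with
            ⟨h1, h2⟩ | ⟨h1, h2⟩
          · rw [ih, hti] at h2
            exact absurd h2 (not_le.mpr (hr' i))
          · rw [ih] at h1
            exact le_antisymm h1 (hrange (t (k + 1)) (htmem (k + 1))).1
        · have : t (k + 1) = t k := by
            funext j
            have hjk : (j : ℕ) < k := lt_of_lt_of_le j.isLt (not_lt.mp hk)
            simp [ht, hjk, Nat.lt_succ_of_lt hjk]
          rw [this, ih]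
  have : t n = s := by
    funext j; simp [ht, j.isLt]
  rw [← this, key n]
end

section
/- Let φ : [0,1]^n → [0,1] be defined by φ(r) = sup { y ∈ [0,1] : #{i : r_i ≥ y}/n ≥ y }. Then φ is strategy-proof: for every profile r, voter i, and profile s differing from r only in coordinate i, either φ(s) ≥ φ(r) ≥ r_i or φ(s) ≤ φ(r) ≤ r_i. -/
/-- The linear (uniform) median on `[0,1]^n`, defined via the grading curve `g(y) = y`. -/
noncomputable def linMed (n : ℕ) (r : Fin n → ℝ) : ℝ :=
  sSup {y : ℝ | y ∈ Set.Icc (0 : ℝ) 1 ∧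
    y ≤ ((Finset.univ.filter (fun i => y ≤ r i)).card : ℝ) / n}

namespace LinMedAux

def S (n : ℕ) (r : Fin n → ℝ) : Set ℝ :=
  {y : ℝ | y ∈ Set.Icc (0 : ℝ) 1 ∧
    y ≤ ((Finset.univ.filter (fun i => y ≤ r i)).card : ℝ) / n}

lemma linMed_eq (n : ℕ) (r : Fin n → ℝ) : linMed n r = sSup (S n r) := rfl

lemma zero_mem (n : ℕ) (r : Fin n → ℝ) : (0 : ℝ) ∈ S n r :=
  ⟨⟨le_refl 0, zero_le_one⟩, by positivity⟩

lemma S_nonempty (n : ℕ) (r : Fin n → ℝ) : (S n r).Nonempty := ⟨0, zero_mem n r⟩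

lemma S_bddAbove (n : ℕ) (r : Fin n → ℝ) : BddAbove (S n r) :=
  ⟨1, fun _ hy => hy.1.2⟩

lemma linMed_nonneg (n : ℕ) (r : Fin n → ℝ) : 0 ≤ linMed n r :=
  le_csSup (S_bddAbove n r) (zero_mem n r)

lemma S_dc {n : ℕ} {r : Fin n → ℝ} {y y' : ℝ} (h : y ∈ S n r)
    (h0 : 0 ≤ y') (hle : y' ≤ y) : y' ∈ S n r := by
  refine ⟨⟨h0, hle.trans h.1.2⟩, ?_⟩
  have hsub : (Finset.univ.filter (fun i => y ≤ r i)) ⊆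
      (Finset.univ.filter (fun i => y' ≤ r i)) :=
    Finset.monotone_filter_right _ (fun i _ hi => hle.trans hi)
  have hc : ((Finset.univ.filter (fun i => y ≤ r i)).card : ℝ) ≤
      ((Finset.univ.filter (fun i => y' ≤ r i)).card : ℝ) := by
    exact_mod_cast Finset.card_le_card hsub
  calc y' ≤ y := hle
    _ ≤ _ := h.2
    _ ≤ _ := by gcongr

/-- If `y ∈ S n r` and `r i < y`, and `s` agrees with `r` off `i`, then `y ∈ S n s`. -/
lemma mem_S_of_gt {n : ℕ} {r s : Fin n → ℝ} {i : Fin n}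
    (hsi : ∀ j, j ≠ i → s j = r j) {y : ℝ} (h : y ∈ S n r) (hy : r i < y) :
    y ∈ S n s := by
  refine ⟨h.1, ?_⟩
  have hsub : (Finset.univ.filter (fun j => y ≤ r j)) ⊆
      (Finset.univ.filter (fun j => y ≤ s j)) := by
    intro j hj
    simp only [Finset.mem_filter, Finset.mem_univ, true_and] at hj ⊢
    have hji : j ≠ i := by rintro rfl; exact absurd hj (not_le.mpr hy)
    rw [hsi j hji]; exact hj
  have hc : ((Finset.univ.filter (fun j => y ≤ r j)).card : ℝ) ≤
      ((Finset.univ.filter (fun j => y ≤ s j)).card : ℝ) := by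
    exact_mod_cast Finset.card_le_card hsub
  calc y ≤ _ := h.2
    _ ≤ _ := by gcongr

/-- If `y ∈ S n s` and `y ≤ r i`, and `s` agrees with `r` off `i`, then `y ∈ S n r`. -/
lemma mem_S_of_le {n : ℕ} {r s : Fin n → ℝ} {i : Fin n}
    (hsi : ∀ j, j ≠ i → s j = r j) {y : ℝ} (h : y ∈ S n s) (hy : y ≤ r i) :
    y ∈ S n r := by
  refine ⟨h.1, ?_⟩
  have hsub : (Finset.univ.filter (fun j => y ≤ s j)) ⊆
      (Finset.univ.filter (fun j => y ≤ r j)) := by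
    intro j hj
    simp only [Finset.mem_filter, Finset.mem_univ, true_and] at hj ⊢
    by_cases hji : j = i
    · subst hji; exact hy
    · rw [← hsi j hji]; exact hj
  have hc : ((Finset.univ.filter (fun j => y ≤ s j)).card : ℝ) ≤
      ((Finset.univ.filter (fun j => y ≤ r j)).card : ℝ) := by
    exact_mod_cast Finset.card_le_card hsub
  calc y ≤ _ := h.2
    _ ≤ _ := by gcongr

end LinMedAux

open LinMedAux in
/-- The linear median is strategy-proof on `[0,1]^n`. -/
theorem linMed_strategyProof (n : ℕ) (hn : 0 < n) :
    ∀ r s : Fin n → ℝ, (∀ j, r j ∈ Set.Icc (0 : ℝ) 1) → (∀ j, s j ∈ Set.Icc (0 : ℝ) 1) →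
      ∀ i : Fin n, (∀ j, j ≠ i → s j = r j) →
      (linMed n s ≥ linMed n r ∧ linMed n r ≥ r i) ∨
      (linMed n s ≤ linMed n r ∧ linMed n r ≤ r i) := by
  intro r s hr hs i hsi
  rcases lt_trichotomy (r i) (linMed n r) with hlt | heq | hgt
  · -- show linMed n s ≥ linMed n r
    left
    refine ⟨?_, le_of_lt hlt⟩
    have hub : linMed n r ≤ max (r i) (linMed n s) := by
      rw [linMed_eq]
      refine csSup_le (S_nonempty n r) (fun y hy => ?_)
      rcases le_or_gt y (r i) with h | h
      · exact le_max_of_le_left h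
      · exact le_max_of_le_right
          (le_csSup (S_bddAbove n s) (mem_S_of_gt hsi hy h))
    rcases max_cases (r i) (linMed n s) with ⟨he, _⟩ | ⟨he, _⟩
    · rw [he] at hub; exact absurd hub (not_le.mpr hlt)
    · rw [he] at hub; exact hub
  · rcases le_total (linMed n s) (linMed n r) with h | h
    · exact Or.inr ⟨h, heq.ge⟩
    · exact Or.inl ⟨h, heq.le⟩
  · -- show linMed n s ≤ linMed n r
    right
    refine ⟨?_, le_of_lt hgt⟩
    rw [linMed_eq n s]
    refine csSup_le (S_nonempty n s) (fun y hy => ?_)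
    by_contra hc
    push_neg at hc
    set y' := min y (r i) with hy'
    have hy'pos : linMed n r < y' := lt_min hc hgt
    have hy'S : y' ∈ S n s := S_dc hy ((linMed_nonneg n r).trans hy'pos.le) (min_le_left _ _)
    have : y' ∈ S n r := mem_S_of_le hsi hy'S (min_le_right _ _)
    exact absurd (le_csSup (S_bddAbove n r) this) (not_le.mpr hy'pos)
end

section
/- The linear median φ(r) = sup { y ∈ [0,1] : #{i : r_i ≥ y}/n ≥ y } on [0,1]^n coincides with the median of the list (r_1, …, r_n, 0, 1/n, 2/n, …, (n−1)/n, 1), i.e., with Moulin's median formula using n+1 phantoms uniformly spaced in [0,1]. -/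
lemma countP_ge_of_sorted (L : List ℝ) (hs : L.Pairwise (· ≤ ·)) (k : ℕ) (hk : k < L.length) :
    L.length - k ≤ L.countP (fun x => decide (L[k] ≤ x)) := by
  have h1 : L.countP (fun x => decide (L[k] ≤ x)) =
      (L.take k).countP (fun x => decide (L[k] ≤ x))
        + (L.drop k).countP (fun x => decide (L[k] ≤ x)) := by
    rw [← List.countP_append, List.take_append_drop]
  rw [h1]
  have h2 : (L.drop k).countP (fun x => decide (L[k] ≤ x)) = (L.drop k).length := by
    rw [List.countP_eq_length]
    intro a ha
    rw [List.mem_iff_getElem] at ha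
    obtain ⟨j, hj, rfl⟩ := ha
    rw [List.length_drop] at hj
    rw [List.getElem_drop]
    simpa using hs.rel_get_of_le (a := ⟨k, hk⟩) (b := ⟨k + j, by omega⟩) (by simp)
  rw [h2, List.length_drop]
  omega

lemma le_getElem_of_countP (L : List ℝ) (hs : L.Pairwise (· ≤ ·)) (n : ℕ)
    (hlen : L.length = 2 * n + 1) (y : ℝ)
    (hc : n + 1 ≤ L.countP (fun x => decide (y ≤ x))) :
    y ≤ L[n]'(by omega) := by
  by_contra h
  push_neg at h
  have h1 : (L.take (n+1)).countP (fun x => decide (y ≤ x)) = 0 := by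
    rw [List.countP_eq_zero]
    intro a ha
    rw [List.mem_iff_getElem] at ha
    obtain ⟨j, hj, rfl⟩ := ha
    have hj' : j < n + 1 := by
      rw [List.length_take] at hj; omega
    rw [List.getElem_take]
    simp only [decide_eq_true_eq, not_le]
    refine lt_of_le_of_lt ?_ h
    exact hs.rel_get_of_le (a := ⟨j, by omega⟩) (b := ⟨n, by omega⟩) (by simp; omega)
  have h2 : L.countP (fun x => decide (y ≤ x)) =
      (L.take (n+1)).countP (fun x => decide (y ≤ x))
        + (L.drop (n+1)).countP (fun x => decide (y ≤ x)) := by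
    rw [← List.countP_append, List.take_append_drop]
  have h3 := List.countP_le_length (l := L.drop (n+1)) (p := fun x => decide (y ≤ x))
  rw [List.length_drop] at h3
  omega

lemma countP_range_ge (c : ℕ) : ∀ m : ℕ, (List.range m).countP (fun k => decide (c ≤ k)) = m - c := by
  intro m
  induction m with
  | zero => simp
  | succ m ih =>
    rw [List.range_succ, List.countP_append, ih]
    simp only [List.countP_singleton]
    by_cases h : c ≤ m <;> simp [h] <;> omega

lemma countP_finRange (m : ℕ) (p : Fin m → Prop) [DecidablePred p] :
    (List.finRange m).countP (fun i => decide (p i)) = (Finset.univ.filter p).card := by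
  rw [List.countP_eq_length_filter]
  rfl

lemma phantom_count (n : ℕ) (hn : 0 < n) (y : ℝ) :
    (List.ofFn (fun k : Fin (n + 1) => (k : ℝ) / n)).countP (fun x => decide (y ≤ x))
      = n + 1 - ⌈n * y⌉₊ := by
  rw [List.ofFn_eq_map, List.countP_map]
  have : ((fun x => decide (y ≤ x)) ∘ fun k : Fin (n+1) => (k : ℝ) / n)
      = (fun k : Fin (n+1) => decide (⌈n * y⌉₊ ≤ (k : ℕ))) := by
    funext k
    simp only [Function.comp]
    congr 1
    rw [eq_iff_iff, Nat.ceil_le]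
    rw [le_div_iff₀ (by positivity)]
    constructor
    · intro h; calc n * y = y * n := by ring
        _ ≤ (k : ℝ) := h
    · intro h; calc y * n = n * y := by ring
        _ ≤ (k : ℝ) := h
  rw [this]
  have h2 : (List.finRange (n+1)).countP (fun k : Fin (n+1) => decide (⌈n * y⌉₊ ≤ (k : ℕ)))
      = (List.range (n+1)).countP (fun k => decide (⌈n * y⌉₊ ≤ k)) := by
    rw [show (List.range (n+1)) = (List.finRange (n+1)).map Fin.val from (by apply List.ext_getElem <;> simp),
      List.countP_map]
    rfl
  rw [h2, countP_range_ge]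

lemma voter_count (n : ℕ) (r : Fin n → ℝ) (y : ℝ) :
    (List.ofFn r).countP (fun x => decide (y ≤ x))
      = (Finset.univ.filter (fun i => y ≤ r i)).card := by
  rw [List.ofFn_eq_map, List.countP_map]
  exact countP_finRange n (fun i => y ≤ r i)

/-- The `k`-th smallest element (0-indexed) of a list of reals. -/
noncomputable def nthSmallest (l : List ℝ) (k : ℕ) : ℝ :=
  ((l : Multiset ℝ).sort (· ≤ ·)).getD k 0

/-- The median of `2n+1` reals: the `(n+1)`-st smallest. -/
noncomputable def medOdd (n : ℕ) (l : List ℝ) : ℝ := nthSmallest l n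

/-- the linear median coincides with Moulin's median formula with the
`n+1` phantoms `0, 1/n, …, (n-1)/n, 1` uniformly spaced in `[0,1]`. -/
theorem linMed_eq_phantom_median (n : ℕ) (hn : 0 < n)
    (r : Fin n → ℝ) (hr : ∀ j, r j ∈ Set.Icc (0 : ℝ) 1) :
    linMed n r =
      medOdd n (List.ofFn r ++ List.ofFn (fun k : Fin (n + 1) => (k : ℝ) / n)) := by
  set l : List ℝ := List.ofFn r ++ List.ofFn (fun k : Fin (n + 1) => (k : ℝ) / n) with hl
  set L : List ℝ := (↑l : Multiset ℝ).sort (· ≤ ·) with hL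
  have hperm : L.Perm l := Multiset.coe_eq_coe.mp (Multiset.sort_eq _ _)
  have hlen : L.length = 2 * n + 1 := by
    rw [hperm.length_eq, hl, List.length_append, List.length_ofFn, List.length_ofFn]
    omega
  have hsort : L.Pairwise (· ≤ ·) := Multiset.pairwise_sort _ _
  have hnpos : (0 : ℝ) < n := by exact_mod_cast hn
  -- counting identity
  have hcount : ∀ y : ℝ, L.countP (fun x => decide (y ≤ x)) =
      (Finset.univ.filter (fun i => y ≤ r i)).card + (n + 1 - ⌈n * y⌉₊) := by
    intro y
    rw [hperm.countP_eq, hl, List.countP_append, voter_count, phantom_count n hn]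
  have hnn : n < L.length := by omega
  have hmed : medOdd n l = L[n] := by
    rw [medOdd, nthSmallest, ← hL, List.getD_eq_getElem L 0 hnn]
  set m : ℝ := L[n] with hm
  -- m ∈ [0,1]
  have hmem : m ∈ l := hperm.mem_iff.mp (List.getElem_mem hnn)
  have hm01 : m ∈ Set.Icc (0:ℝ) 1 := by
    rw [hl, List.mem_append] at hmem
    rcases hmem with hmem | hmem
    · obtain ⟨i, hi⟩ := Set.mem_range.mp ((List.mem_ofFn' _ _).mp hmem)
      rw [← hi]; exact hr i
    · obtain ⟨k, hk⟩ := Set.mem_range.mp ((List.mem_ofFn' _ _).mp hmem)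
      rw [← hk]
      constructor
      · positivity
      · rw [div_le_one hnpos]
        exact_mod_cast Nat.le_of_lt_succ k.isLt
  have hceil_le : ∀ y : ℝ, y ≤ 1 → ⌈n * y⌉₊ ≤ n := by
    intro y hy
    rw [Nat.ceil_le]
    calc (n:ℝ) * y ≤ n * 1 := by nlinarith
      _ = n := by ring
  -- m is in the set S
  have hmS : m ∈ {y : ℝ | y ∈ Set.Icc (0 : ℝ) 1 ∧
      y ≤ ((Finset.univ.filter (fun i => y ≤ r i)).card : ℝ) / n} := by
    refine ⟨hm01, ?_⟩
    have h1 := countP_ge_of_sorted L hsort n hnn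
    rw [hcount m, hlen] at h1
    have h2 := hceil_le m hm01.2
    have h3 : ⌈n * m⌉₊ ≤ (Finset.univ.filter (fun i => m ≤ r i)).card := by omega
    have h4 : n * m ≤ ((Finset.univ.filter (fun i => m ≤ r i)).card : ℝ) := by
      calc n * m ≤ (⌈n * m⌉₊ : ℝ) := Nat.le_ceil _
        _ ≤ _ := by exact_mod_cast h3
    rw [le_div_iff₀ hnpos]
    linarith [h4]
  -- m is an upper bound of S
  have hub : ∀ y ∈ {y : ℝ | y ∈ Set.Icc (0 : ℝ) 1 ∧
      y ≤ ((Finset.univ.filter (fun i => y ≤ r i)).card : ℝ) / n}, y ≤ m := by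
    rintro y ⟨hy01, hy⟩
    rw [le_div_iff₀ hnpos] at hy
    have h1 : ⌈n * y⌉₊ ≤ (Finset.univ.filter (fun i => y ≤ r i)).card := by
      rw [Nat.ceil_le]
      calc (n:ℝ) * y = y * n := by ring
        _ ≤ _ := hy
    have h2 := hceil_le y hy01.2
    have h3 : n + 1 ≤ L.countP (fun x => decide (y ≤ x)) := by
      rw [hcount y]; omega
    exact le_getElem_of_countP L hsort n hlen y h3
  rw [hmed, linMed]
  exact le_antisymm (csSup_le (Set.nonempty_of_mem hmS) hub)
    (le_csSup ⟨1, fun y hy => hy.1.2⟩ hmS)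
end

section
/- The linear median is proportional: for every n and every profile X ∈ {0,1}^n, φ(X) = (∑_i X_i)/n, where φ(r) = sup { y ∈ [0,1] : #{i : r_i ≥ y}/n ≥ y }. -/
/-- the linear median is proportional: on any 0/1 profile it returns the
fraction of ones. -/
theorem linMed_proportional (n : ℕ) (hn : 0 < n)
    (X : Fin n → ℝ) (hX : ∀ i, X i = 0 ∨ X i = 1) :
    linMed n X = (∑ i, X i) / n := by
  have hn' : (0:ℝ) < n := by exact_mod_cast hn
  set k := (Finset.univ.filter (fun i => X i = 1)).card with hk
  have hsum : (∑ i, X i) = (k : ℝ) := by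
    rw [hk, Finset.card_filter]
    push_cast
    apply Finset.sum_congr rfl
    intro i _
    rcases hX i with h | h <;> simp [h]
  have hkn : (k:ℝ) ≤ n := by have := Finset.card_filter_le Finset.univ (fun i => X i = 1); simp [Finset.card_univ] at this; exact_mod_cast this
  have hset : {y : ℝ | y ∈ Set.Icc (0:ℝ) 1 ∧
      y ≤ ((Finset.univ.filter (fun i => y ≤ X i)).card : ℝ) / n}
      = Set.Icc 0 ((k:ℝ)/n) := by
    ext y
    simp only [Set.mem_setOf_eq, Set.mem_Icc]
    constructor
    · rintro ⟨⟨hy0, hy1⟩, hy⟩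
      refine ⟨hy0, ?_⟩
      rcases eq_or_lt_of_le hy0 with rfl | hy0'
      · positivity
      · have hsub : (Finset.univ.filter (fun i => y ≤ X i)) ⊆
            Finset.univ.filter (fun i => X i = 1) := by
          intro i hi
          simp only [Finset.mem_filter, Finset.mem_univ, true_and] at hi ⊢
          rcases hX i with h | h
          · exfalso; rw [h] at hi; linarith
          · exact h
        have hle := Finset.card_le_card hsub
        calc y ≤ _ / (n:ℝ) := hy
          _ ≤ (k:ℝ)/n := by gcongr
    · rintro ⟨hy0, hyk⟩
      have hy1 : y ≤ 1 := le_trans hyk (by rw [div_le_one hn']; exact hkn)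
      refine ⟨⟨hy0, hy1⟩, ?_⟩
      rcases eq_or_lt_of_le hy0 with rfl | hy0'
      · positivity
      · have hsub : (Finset.univ.filter (fun i => X i = 1)) ⊆
            Finset.univ.filter (fun i => y ≤ X i) := by
          intro i hi
          simp only [Finset.mem_filter, Finset.mem_univ, true_and] at hi ⊢
          rw [hi]; exact hy1
        have hle := Finset.card_le_card hsub
        calc y ≤ (k:ℝ)/n := hyk
          _ ≤ _ := by gcongr
  rw [linMed, hset, hsum, csSup_Icc (by positivity)]
end

section
/- Let φ : [0,1]^n → [0,1] be strategy-proof and proportional, i.e., φ(X) = (∑_i X_i)/n for every X ∈ {0,1}^n. Then φ equals the linear median: φ(r) = sup { y ∈ [0,1] : #{i : r_i ≥ y}/n ≥ y } for all profiles r. -/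
section aux

variable {n : ℕ} {φ : (Fin n → ℝ) → ℝ}

private def SPcond (φ : (Fin n → ℝ) → ℝ) : Prop :=
  ∀ r s : Fin n → ℝ,
    (∀ j, r j ∈ Set.Icc (0 : ℝ) 1) → (∀ j, s j ∈ Set.Icc (0 : ℝ) 1) →
    ∀ i : Fin n, (∀ j, j ≠ i → s j = r j) →
    (φ s ≥ φ r ∧ φ r ≥ r i) ∨ (φ s ≤ φ r ∧ φ r ≤ r i)

/-- Monotonicity in one coordinate. -/
private lemma sp_mono (hSP : SPcond φ)
    {r s : Fin n → ℝ} (hr : ∀ j, r j ∈ Set.Icc (0 : ℝ) 1)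
    (hs : ∀ j, s j ∈ Set.Icc (0 : ℝ) 1)
    (i : Fin n) (hdiff : ∀ j, j ≠ i → s j = r j) (hle : r i ≤ s i) :
    φ r ≤ φ s := by
  rcases hSP r s hr hs i hdiff with ⟨h1, _⟩ | ⟨h1, h2⟩
  · exact h1
  · rcases hSP s r hs hr i (fun j hj => (hdiff j hj).symm) with ⟨g1, g2⟩ | ⟨g1, _⟩
    · linarith
    · exact g1

/-- The value after a one-coordinate change is at least `min (φ r) (s i)`. -/
private lemma sp_minlem (hSP : SPcond φ)
    {r s : Fin n → ℝ} (hr : ∀ j, r j ∈ Set.Icc (0 : ℝ) 1)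
    (hs : ∀ j, s j ∈ Set.Icc (0 : ℝ) 1)
    (i : Fin n) (hdiff : ∀ j, j ≠ i → s j = r j) :
    min (φ r) (s i) ≤ φ s := by
  rcases hSP s r hs hr i (fun j hj => (hdiff j hj).symm) with ⟨_, g2⟩ | ⟨g1, _⟩
  · exact le_trans (min_le_right _ _) g2
  · exact le_trans (min_le_left _ _) g1

/-- Uncompromisingness: a voter strictly below the outcome cannot move it by
reporting anything still at most the outcome. -/
private lemma sp_uncomp (hSP : SPcond φ)
    {r s : Fin n → ℝ} (hr : ∀ j, r j ∈ Set.Icc (0 : ℝ) 1)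
    (hs : ∀ j, s j ∈ Set.Icc (0 : ℝ) 1)
    (i : Fin n) (hdiff : ∀ j, j ≠ i → s j = r j)
    (h1 : r i < φ r) (h2 : s i ≤ φ r) :
    φ s = φ r := by
  have hge : φ r ≤ φ s := by
    rcases hSP r s hr hs i hdiff with ⟨g1, _⟩ | ⟨_, g2⟩
    · exact g1
    · linarith
  rcases hSP s r hs hr i (fun j hj => (hdiff j hj).symm) with ⟨g1, _⟩ | ⟨_, g2⟩
  · exact le_antisymm g1 hge
  · linarith

end aux

/-- a strategy-proof and proportional voting rule on `[0,1]^n` is the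
linear median. -/
theorem sp_proportional_eq_linMed (n : ℕ) (hn : 0 < n) (φ : (Fin n → ℝ) → ℝ)
    (hrange : ∀ r : Fin n → ℝ, (∀ j, r j ∈ Set.Icc (0 : ℝ) 1) → φ r ∈ Set.Icc (0 : ℝ) 1)
    (hSP : ∀ r s : Fin n → ℝ,
      (∀ j, r j ∈ Set.Icc (0 : ℝ) 1) → (∀ j, s j ∈ Set.Icc (0 : ℝ) 1) →
      ∀ i : Fin n, (∀ j, j ≠ i → s j = r j) →
      (φ s ≥ φ r ∧ φ r ≥ r i) ∨ (φ s ≤ φ r ∧ φ r ≤ r i))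
    (hprop : ∀ X : Fin n → ℝ, (∀ i, X i = 0 ∨ X i = 1) → φ X = (∑ i, X i) / n) :
    ∀ r : Fin n → ℝ, (∀ j, r j ∈ Set.Icc (0 : ℝ) 1) → φ r = linMed n r := by
  have hSP' : SPcond φ := hSP
  intro r hr
  classical
  have ha01 : φ r ∈ Set.Icc (0 : ℝ) 1 := hrange r hr
  set a := φ r with ha
  -- proportionality in counting form
  have hpropc : ∀ (y : ℝ),
      φ (fun i => if y ≤ r i then (1:ℝ) else 0)
        = ((Finset.univ.filter (fun i => y ≤ r i)).card : ℝ) / n := by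
    intro y
    rw [hprop _ (fun i => by by_cases h : y ≤ r i <;> simp [h])]
    congr 1
    simp [Finset.sum_boole]
  ------------------------------------------------------------------
  -- LOWER BOUND: any feasible y satisfies y ≤ φ r
  ------------------------------------------------------------------
  have lower : ∀ y : ℝ, 0 ≤ y →
      y ≤ ((Finset.univ.filter (fun i => y ≤ r i)).card : ℝ) / n → y ≤ φ r := by
    intro y hy0 hyc
    set X : Fin n → ℝ := fun i => if y ≤ r i then 1 else 0 with hX
    have hXr : ∀ j, X j ∈ Set.Icc (0:ℝ) 1 := by
      intro j; by_cases h : y ≤ r j <;> simp [X, h]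
    have key : ∀ T : Finset (Fin n),
        y ≤ φ (fun i => if i ∈ T then r i else X i) := by
      intro T
      induction T using Finset.induction_on with
      | empty =>
          have he : (fun i => if i ∈ (∅ : Finset (Fin n)) then r i else X i) = X := by
            funext i; simp
          rw [he, hX, hpropc y]; exact hyc
      | @insert j T hj ih =>
          set p : Fin n → ℝ := fun i => if i ∈ T then r i else X i with hp
          set p' : Fin n → ℝ := fun i => if i ∈ insert j T then r i else X i with hp'
          have hdiff : ∀ k, k ≠ j → p' k = p k := by
            intro k hk; simp [hp, hp', Finset.mem_insert, hk]
          have hpr : ∀ k, p k ∈ Set.Icc (0:ℝ) 1 := by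
            intro k; simp only [hp]; split_ifs
            · exact hr k
            · exact hXr k
          have hpr' : ∀ k, p' k ∈ Set.Icc (0:ℝ) 1 := by
            intro k; simp only [hp']; split_ifs
            · exact hr k
            · exact hXr k
          have hp'j : p' j = r j := by simp [hp']
          have hpj : p j = X j := by simp [hp, hj]
          by_cases hyr : y ≤ r j
          · have := sp_minlem hSP' hpr hpr' j hdiff
            rw [hp'j] at this
            calc y ≤ min (φ p) (r j) := le_min ih hyr
              _ ≤ φ p' := this
          · have hle : p j ≤ p' j := by
              rw [hpj, hp'j]; simp [X, hyr]; exact (hr j).1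
            exact le_trans ih (sp_mono hSP' hpr hpr' j hdiff hle)
    have := key Finset.univ
    have he : (fun i => if i ∈ (Finset.univ : Finset (Fin n)) then r i else X i) = r := by
      funext i; simp
    rwa [he] at this
  ------------------------------------------------------------------
  -- UPPER BOUND: a = φ r is itself feasible
  ------------------------------------------------------------------
  -- Phase 1: raise all coordinates with r i ≥ a to 1; φ stays ≥ a.
  set q : Fin n → ℝ := fun i => if a ≤ r i then 1 else r i with hq
  have hqr : ∀ j, q j ∈ Set.Icc (0:ℝ) 1 := by
    intro j; simp only [hq]; split_ifs
    · exact ⟨zero_le_one, le_rfl⟩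
    · exact hr j
  have phase1 : ∀ T : Finset (Fin n),
      a ≤ φ (fun i => if i ∈ T ∧ a ≤ r i then 1 else r i) := by
    intro T
    induction T using Finset.induction_on with
    | empty =>
        have he : (fun i => if i ∈ (∅ : Finset (Fin n)) ∧ a ≤ r i then (1:ℝ) else r i) = r := by
          funext i; simp
        rw [he]
    | @insert j T hj ih =>
        set p : Fin n → ℝ := fun i => if i ∈ T ∧ a ≤ r i then 1 else r i with hp
        set p' : Fin n → ℝ := fun i => if i ∈ insert j T ∧ a ≤ r i then 1 else r i with hp'
        have hpr : ∀ k, p k ∈ Set.Icc (0:ℝ) 1 := by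
          intro k; simp only [hp]; split_ifs
          · exact ⟨zero_le_one, le_rfl⟩
          · exact hr k
        have hpr' : ∀ k, p' k ∈ Set.Icc (0:ℝ) 1 := by
          intro k; simp only [hp']; split_ifs
          · exact ⟨zero_le_one, le_rfl⟩
          · exact hr k
        by_cases har : a ≤ r j
        · have hdiff : ∀ k, k ≠ j → p' k = p k := by
            intro k hk; simp [hp, hp', Finset.mem_insert, hk]
          have hle : p j ≤ p' j := by
            simp [hp, hp', hj, har]; exact (hr j).2
          exact le_trans ih (sp_mono hSP' hpr hpr' j hdiff hle)
        · have he : p' = p := by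
            funext i
            by_cases hi : i = j
            · simp [hp, hp', hi, har, hj]
            · simp [hp, hp', Finset.mem_insert, hi]
          rw [he]; exact ih
  have hqa : a ≤ φ q := by
    have := phase1 Finset.univ
    have he : (fun i => if i ∈ (Finset.univ : Finset (Fin n)) ∧ a ≤ r i then (1:ℝ) else r i) = q := by
      funext i; simp [hq]
    rwa [he] at this
  -- Phase 2: lower all coordinates with r i < a to 0; φ stays constant.
  have phase2 : ∀ T : Finset (Fin n),
      φ (fun i => if a ≤ r i then (1:ℝ) else if i ∈ T then 0 else r i) = φ q := by
    intro T
    induction T using Finset.induction_on with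
    | empty =>
        congr 1
    | @insert j T hj ih =>
        set p : Fin n → ℝ := fun i => if a ≤ r i then (1:ℝ) else if i ∈ T then 0 else r i with hp
        set p' : Fin n → ℝ := fun i => if a ≤ r i then (1:ℝ) else if i ∈ insert j T then 0 else r i with hp'
        have hpr : ∀ k, p k ∈ Set.Icc (0:ℝ) 1 := by
          intro k; simp only [hp]; split_ifs
          · exact ⟨zero_le_one, le_rfl⟩
          · exact ⟨le_rfl, zero_le_one⟩
          · exact hr k
        have hpr' : ∀ k, p' k ∈ Set.Icc (0:ℝ) 1 := by
          intro k; simp only [hp']; split_ifs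
          · exact ⟨zero_le_one, le_rfl⟩
          · exact ⟨le_rfl, zero_le_one⟩
          · exact hr k
        by_cases har : a ≤ r j
        · have he : p' = p := by
            funext i
            by_cases hi : i = j
            · simp [hp, hp', hi, har]
            · simp [hp, hp', Finset.mem_insert, hi]
          rw [he]; exact ih
        · have hdiff : ∀ k, k ≠ j → p' k = p k := by
            intro k hk; simp [hp, hp', Finset.mem_insert, hk]
          have hpj : p j = r j := by simp [hp, har, hj]
          have hp'j : p' j = 0 := by simp [hp', har]
          have h1 : p j < φ p := by
            rw [hpj, ih]; exact lt_of_lt_of_le (lt_of_not_ge har) hqa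
          have h2 : p' j ≤ φ p := by
            rw [hp'j, ih]; exact le_trans ha01.1 hqa
          rw [sp_uncomp hSP' hpr hpr' j hdiff h1 h2]; exact ih
  have haA : a ≤ ((Finset.univ.filter (fun i => a ≤ r i)).card : ℝ) / n := by
    have := phase2 Finset.univ
    have he : (fun i => if a ≤ r i then (1:ℝ) else if i ∈ (Finset.univ : Finset (Fin n)) then 0 else r i)
        = fun i => if a ≤ r i then (1:ℝ) else 0 := by
      funext i; by_cases h : a ≤ r i <;> simp [h]
    rw [he, hpropc a] at this
    rw [this]; exact hqa
  ------------------------------------------------------------------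
  -- Conclusion via sSup
  ------------------------------------------------------------------
  unfold linMed
  set A := {y : ℝ | y ∈ Set.Icc (0 : ℝ) 1 ∧
    y ≤ ((Finset.univ.filter (fun i => y ≤ r i)).card : ℝ) / n} with hA
  have hmemA : a ∈ A := ⟨ha01, haA⟩
  have hbdd : BddAbove A := ⟨1, fun y hy => hy.1.2⟩
  apply le_antisymm
  · exact le_csSup hbdd hmemA
  · exact csSup_le ⟨a, hmemA⟩ (fun y hy => lower y hy.1.1 hy.2)
end

section
/- A strategy-proof voting rule determines its phantom values on extreme profiles monotonically: if φ : {0,1}^n → ℝ is the restriction of a strategy-proof rule on [0,1]^n to profiles of 0s and 1s, then φ is monotone: X ≤ Y coordinatewise implies φ(X) ≤ φ(Y). -/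
/-- the restriction of a strategy-proof rule on `[0,1]^n` to extreme
(0/1) profiles is monotone. -/
theorem sp_phantom_monotone (n : ℕ) (φ : (Fin n → ℝ) → ℝ)
    (hrange : ∀ r : Fin n → ℝ, (∀ j, r j ∈ Set.Icc (0 : ℝ) 1) → φ r ∈ Set.Icc (0 : ℝ) 1)
    (hSP : ∀ r s : Fin n → ℝ,
      (∀ j, r j ∈ Set.Icc (0 : ℝ) 1) → (∀ j, s j ∈ Set.Icc (0 : ℝ) 1) →
      ∀ i : Fin n, (∀ j, j ≠ i → s j = r j) →
      (φ s ≥ φ r ∧ φ r ≥ r i) ∨ (φ s ≤ φ r ∧ φ r ≤ r i)) :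
    ∀ X Y : Fin n → ℝ, (∀ i, X i = 0 ∨ X i = 1) → (∀ i, Y i = 0 ∨ Y i = 1) →
      (∀ i, X i ≤ Y i) → φ X ≤ φ Y := by
  -- one-step monotonicity
  have step : ∀ r s : Fin n → ℝ,
      (∀ j, r j ∈ Set.Icc (0 : ℝ) 1) → (∀ j, s j ∈ Set.Icc (0 : ℝ) 1) →
      ∀ i : Fin n, (∀ j, j ≠ i → s j = r j) → r i ≤ s i → φ r ≤ φ s := by
    intro r s hr hs i hagree hle
    rcases hSP r s hr hs i hagree with ⟨h1, _⟩ | ⟨h1, h2⟩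
    · exact h1
    · rcases hSP s r hs hr i (fun j hj => (hagree j hj).symm) with ⟨h3, h4⟩ | ⟨h3, _⟩
      · linarith
      · exact h3
  intro X Y hX hY hXY
  have hXI : ∀ j, X j ∈ Set.Icc (0 : ℝ) 1 := by
    intro j; rcases hX j with h | h <;> simp [h]
  have hYI : ∀ j, Y j ∈ Set.Icc (0 : ℝ) 1 := by
    intro j; rcases hY j with h | h <;> simp [h]
  have key : ∀ S : Finset (Fin n),
      φ X ≤ φ (fun i => if i ∈ S then Y i else X i) := by
    intro S
    induction S using Finset.induction_on with
    | empty => simp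
    | @insert a S ha ih =>
      refine le_trans ih (step _ _ ?_ ?_ a ?_ ?_)
      · intro j; by_cases h : j ∈ S <;> simp [h, hXI j, hYI j]
      · intro j; by_cases h : j ∈ insert a S <;> simp [h, hXI j, hYI j]
      · intro j hj
        simp [Finset.mem_insert, hj]
      · simp [ha, hXY a]
  have := key Finset.univ
  simpa using this
end

section
/- Let φ be a strategy-proof voting rule on [m,M]^n that is voter-sovereign (surjective onto [m,M]). Then φ is unanimous and Pareto-bounded: for all profiles r, min_i r_i ≤ φ(r) ≤ max_i r_i. -/
section Aux

variable (m M : ℝ) {n : ℕ} (φ : (Fin n → ℝ) → ℝ)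
variable (hSP : ∀ r s : Fin n → ℝ,
      (∀ j, r j ∈ Set.Icc m M) → (∀ j, s j ∈ Set.Icc m M) →
      ∀ i : Fin n, (∀ j, j ≠ i → s j = r j) →
      (φ s ≥ φ r ∧ φ r ≥ r i) ∨ (φ s ≤ φ r ∧ φ r ≤ r i))

include hSP

lemma sp_step_le (b : ℝ) (r s : Fin n → ℝ)
    (hr : ∀ j, r j ∈ Set.Icc m M) (hs : ∀ j, s j ∈ Set.Icc m M)
    (i : Fin n) (hdiff : ∀ j, j ≠ i → s j = r j)
    (hrb : φ r ≤ b) (hsi : s i ≤ b) : φ s ≤ b := by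
  rcases hSP r s hr hs i hdiff with ⟨h1, h2⟩ | ⟨h1, h2⟩
  · rcases hSP s r hs hr i (fun j hj => (hdiff j hj).symm) with ⟨h3, h4⟩ | ⟨h3, h4⟩
    · linarith
    · linarith
  · linarith

lemma sp_step_ge (b : ℝ) (r s : Fin n → ℝ)
    (hr : ∀ j, r j ∈ Set.Icc m M) (hs : ∀ j, s j ∈ Set.Icc m M)
    (i : Fin n) (hdiff : ∀ j, j ≠ i → s j = r j)
    (hrb : b ≤ φ r) (hsi : b ≤ s i) : b ≤ φ s := by
  rcases hSP r s hr hs i hdiff with ⟨h1, h2⟩ | ⟨h1, h2⟩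
  · linarith
  · rcases hSP s r hs hr i (fun j hj => (hdiff j hj).symm) with ⟨h3, h4⟩ | ⟨h3, h4⟩
    · linarith
    · linarith

lemma sp_chain_le (b : ℝ) (p q : Fin n → ℝ)
    (hp : ∀ j, p j ∈ Set.Icc m M) (hq : ∀ j, q j ∈ Set.Icc m M)
    (hpb : φ p ≤ b) (hqb : ∀ j, q j ≤ b) : φ q ≤ b := by
  set t : ℕ → (Fin n → ℝ) := fun k j => if (j : ℕ) < k then q j else p j with ht
  have hmem : ∀ k, ∀ j, t k j ∈ Set.Icc m M := by
    intro k j; simp only [ht]; split <;> [exact hq j; exact hp j]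
  have key : ∀ k, k ≤ n → φ (t k) ≤ b := by
    intro k
    induction k with
    | zero =>
      intro _
      have : t 0 = p := by funext j; simp [ht]
      rwa [this]
    | succ k ih =>
      intro hk1
      have hk : k < n := hk1
      set i : Fin n := ⟨k, hk⟩ with hi
      refine sp_step_le m M φ hSP b (t k) (t (k+1)) (hmem k) (hmem (k+1)) i ?_ (ih (le_of_lt hk)) ?_
      · intro j hj
        have : (j : ℕ) < k + 1 ↔ (j : ℕ) < k := by
          constructor
          · intro h
            rcases Nat.lt_succ_iff_lt_or_eq.mp h with h' | h'
            · exact h'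
            · exact absurd (Fin.ext h' : j = i) hj
          · exact fun h => Nat.lt_succ_of_lt h
        simp only [ht, this]
      · simp only [ht, hi]
        simp [Nat.lt_succ_self]
        exact hqb _
  have : t n = q := by
    funext j; simp [ht, j.isLt]
  rw [← this]; exact key n le_rfl

lemma sp_chain_ge (b : ℝ) (p q : Fin n → ℝ)
    (hp : ∀ j, p j ∈ Set.Icc m M) (hq : ∀ j, q j ∈ Set.Icc m M)
    (hpb : b ≤ φ p) (hqb : ∀ j, b ≤ q j) : b ≤ φ q := by
  set t : ℕ → (Fin n → ℝ) := fun k j => if (j : ℕ) < k then q j else p j with ht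
  have hmem : ∀ k, ∀ j, t k j ∈ Set.Icc m M := by
    intro k j; simp only [ht]; split <;> [exact hq j; exact hp j]
  have key : ∀ k, k ≤ n → b ≤ φ (t k) := by
    intro k
    induction k with
    | zero =>
      intro _
      have : t 0 = p := by funext j; simp [ht]
      rwa [this]
    | succ k ih =>
      intro hk1
      have hk : k < n := hk1
      set i : Fin n := ⟨k, hk⟩ with hi
      refine sp_step_ge m M φ hSP b (t k) (t (k+1)) (hmem k) (hmem (k+1)) i ?_ (ih (le_of_lt hk)) ?_
      · intro j hj
        have : (j : ℕ) < k + 1 ↔ (j : ℕ) < k := by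
          constructor
          · intro h
            rcases Nat.lt_succ_iff_lt_or_eq.mp h with h' | h'
            · exact h'
            · exact absurd (Fin.ext h' : j = i) hj
          · exact fun h => Nat.lt_succ_of_lt h
        simp only [ht, this]
      · simp only [ht, hi]
        simp [Nat.lt_succ_self]
        exact hqb _
  have : t n = q := by
    funext j; simp [ht, j.isLt]
  rw [← this]; exact key n le_rfl

end Aux

/-- a voter-sovereign strategy-proof rule on `[m,M]^n` is unanimous and
Pareto-bounded between the smallest and largest ballots. -/
theorem sp_sovereign_pareto (m M : ℝ) (hmM : m ≤ M) (n : ℕ) (hn : 0 < n)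
    (φ : (Fin n → ℝ) → ℝ)
    (hrange : ∀ r : Fin n → ℝ, (∀ j, r j ∈ Set.Icc m M) → φ r ∈ Set.Icc m M)
    (hSP : ∀ r s : Fin n → ℝ,
      (∀ j, r j ∈ Set.Icc m M) → (∀ j, s j ∈ Set.Icc m M) →
      ∀ i : Fin n, (∀ j, j ≠ i → s j = r j) →
      (φ s ≥ φ r ∧ φ r ≥ r i) ∨ (φ s ≤ φ r ∧ φ r ≤ r i))
    (hsov : ∀ x ∈ Set.Icc m M, ∃ r : Fin n → ℝ, (∀ j, r j ∈ Set.Icc m M) ∧ φ r = x) :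
    (∀ a ∈ Set.Icc m M, φ (fun _ => a) = a) ∧
    (∀ r : Fin n → ℝ, (∀ j, r j ∈ Set.Icc m M) →
      Finset.univ.inf' (Finset.univ_nonempty_iff.mpr ⟨⟨0, hn⟩⟩) r ≤ φ r ∧
      φ r ≤ Finset.univ.sup' (Finset.univ_nonempty_iff.mpr ⟨⟨0, hn⟩⟩) r) := by
  have huna : ∀ a ∈ Set.Icc m M, φ (fun _ => a) = a := by
    intro a ha
    obtain ⟨r, hr, hra⟩ := hsov a ha
    have hca : ∀ j : Fin n, (fun _ : Fin n => a) j ∈ Set.Icc m M := fun _ => ha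
    have h1 : φ (fun _ => a) ≤ a :=
      sp_chain_le m M φ hSP a r (fun _ => a) hr hca (le_of_eq hra) (fun _ => le_rfl)
    have h2 : a ≤ φ (fun _ => a) :=
      sp_chain_ge m M φ hSP a r (fun _ => a) hr hca (ge_of_eq hra) (fun _ => le_rfl)
    linarith
  refine ⟨huna, ?_⟩
  intro r hr
  have hne := Finset.univ_nonempty_iff.mpr (⟨⟨0, hn⟩⟩ : Nonempty (Fin n))
  set bsup := Finset.univ.sup' hne r with hbs
  set binf := Finset.univ.inf' hne r with hbi
  have hsupmem : bsup ∈ Set.Icc m M := by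
    constructor
    · exact le_trans (hr ⟨0, hn⟩).1 (Finset.le_sup' r (Finset.mem_univ _))
    · exact Finset.sup'_le _ _ (fun j _ => (hr j).2)
  have hinfmem : binf ∈ Set.Icc m M := by
    constructor
    · exact Finset.le_inf' _ _ (fun j _ => (hr j).1)
    · exact le_trans (Finset.inf'_le r (Finset.mem_univ ⟨0, hn⟩)) (hr ⟨0, hn⟩).2
  have hcs : ∀ j : Fin n, (fun _ : Fin n => bsup) j ∈ Set.Icc m M := fun _ => hsupmem
  have hci : ∀ j : Fin n, (fun _ : Fin n => binf) j ∈ Set.Icc m M := fun _ => hinfmem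
  constructor
  · exact sp_chain_ge m M φ hSP binf (fun _ => binf) r hci hr
      (ge_of_eq (huna binf hinfmem)) (fun j => Finset.inf'_le r (Finset.mem_univ j))
  · exact sp_chain_le m M φ hSP bsup (fun _ => bsup) r hcs hr
      (le_of_eq (huna bsup hsupmem)) (fun j => Finset.le_sup' r (Finset.mem_univ j))
end

section
/- Fix n ≥ 2, an index i, weights w_j ≥ 0 with w_i > 0 and ∑_{j≠i} w_j > 0, and p > 1. For the profile s with s_j = m for j ≠ i and s_i ∈ (m, M], the unique minimizer s* of x ↦ ∑_j w_j |x − s_j|^p satisfies s* = m + (s_i − m)·(1 + ((∑_{j≠i} w_j)/w_i)^{1/(p−1)})^{−1}; in particular m < s* < s_i. -/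
open Real

lemma aux_strictConvexOn_abs_rpow (a : ℝ) {p : ℝ} (hp : 1 < p) :
    StrictConvexOn ℝ Set.univ (fun x : ℝ => |x - a| ^ p) := by
  have hp0 : (0:ℝ) < p := lt_trans one_pos hp
  refine ⟨convex_univ, ?_⟩
  intro x _ y _ hxy u v hu hv huv
  simp only [smul_eq_mul]
  have hxy' : x - a ≠ y - a := by intro h; apply hxy; linarith
  have hkey : |u * x + v * y - a| ^ p < u * |x - a| ^ p + v * |y - a| ^ p := by
    have harg : u * x + v * y - a = u * (x - a) + v * (y - a) := by
      linear_combination a * huv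
    rcases eq_or_ne |x - a| |y - a| with habs | habs
    · -- |X| = |Y|, X ≠ Y ⇒ Y = -X, X ≠ 0
      rcases abs_eq_abs.mp habs with h | h
      · exact absurd h hxy'
      · have hX : x - a ≠ 0 := by
          intro h0; apply hxy'; rw [h0] at h ⊢; linarith
        have h1 : u * (x - a) + v * (y - a) = (u - v) * (x - a) := by
          rw [h]; ring
        have h2 : |u * x + v * y - a| < |x - a| := by
          rw [harg, h1, abs_mul]
          have : |u - v| < 1 := by
            rw [abs_lt]; constructor <;> linarith
          calc |u - v| * |x - a| < 1 * |x - a| :=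
                (mul_lt_mul_iff_left₀ (abs_pos.mpr hX)).mpr this
            _ = |x - a| := one_mul _
        have h3 : |u * x + v * y - a| ^ p < |x - a| ^ p :=
          Real.rpow_lt_rpow (abs_nonneg _) h2 hp0
        calc |u * x + v * y - a| ^ p < |x - a| ^ p := h3
          _ = u * |x - a| ^ p + v * |y - a| ^ p := by
              rw [← habs]; linear_combination (-(|x - a| ^ p)) * huv
    · have h1 : |u * x + v * y - a| ≤ u * |x - a| + v * |y - a| := by
        rw [harg]
        calc |u * (x - a) + v * (y - a)| ≤ |u * (x - a)| + |v * (y - a)| := abs_add_le _ _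
          _ = u * |x - a| + v * |y - a| := by
              rw [abs_mul, abs_mul, abs_of_pos hu, abs_of_pos hv]
      have h2 : |u * x + v * y - a| ^ p ≤ (u * |x - a| + v * |y - a|) ^ p :=
        Real.rpow_le_rpow (abs_nonneg _) h1 hp0.le
      have h3 := (strictConvexOn_rpow hp).2 (Set.mem_Ici.mpr (abs_nonneg (x - a)))
        (Set.mem_Ici.mpr (abs_nonneg (y - a))) habs hu hv huv
      simp only [smul_eq_mul] at h3
      exact lt_of_le_of_lt h2 h3
  exact hkey

lemma aux_const_mul_strictConvexOn {s : Set ℝ} {f : ℝ → ℝ} {c : ℝ} (hc : 0 < c)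
    (hf : StrictConvexOn ℝ s f) : StrictConvexOn ℝ s (fun x => c * f x) := by
  refine ⟨hf.1, fun x hx y hy hxy u v hu hv huv => ?_⟩
  have h := hf.2 hx hy hxy hu hv huv
  simp only [smul_eq_mul] at h ⊢
  nlinarith

/-- derivative of `|x - a| ^ p` at a point to the right of `a`. -/
lemma aux_hasDerivAt_right (a x₀ : ℝ) {p : ℝ} (hp : 1 < p) (h : a < x₀) :
    HasDerivAt (fun x : ℝ => |x - a| ^ p) (p * (x₀ - a) ^ (p - 1)) x₀ := by
  have h1 : HasDerivAt (fun x : ℝ => x - a) 1 x₀ := (hasDerivAt_id x₀).sub_const a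
  have h2 : HasDerivAt (fun y : ℝ => y ^ p) (p * (x₀ - a) ^ (p - 1)) (x₀ - a) :=
    Real.hasDerivAt_rpow_const (Or.inl (ne_of_gt (sub_pos.mpr h)))
  have h3 := h2.comp x₀ h1
  simp only [mul_one] at h3
  apply h3.congr_of_eventuallyEq
  filter_upwards [eventually_gt_nhds h] with x hx
  rw [abs_of_pos (sub_pos.mpr hx)]; rfl

/-- derivative of `|x - a| ^ p` at a point to the left of `a`. -/
lemma aux_hasDerivAt_left (a x₀ : ℝ) {p : ℝ} (hp : 1 < p) (h : x₀ < a) :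
    HasDerivAt (fun x : ℝ => |x - a| ^ p) (-(p * (a - x₀) ^ (p - 1))) x₀ := by
  have h1 : HasDerivAt (fun x : ℝ => a - x) (-1) x₀ := by
    simpa using (hasDerivAt_id x₀).const_sub a
  have h2 : HasDerivAt (fun y : ℝ => y ^ p) (p * (a - x₀) ^ (p - 1)) (a - x₀) :=
    Real.hasDerivAt_rpow_const (Or.inl (ne_of_gt (sub_pos.mpr h)))
  have h3 := h2.comp x₀ h1
  simp only [mul_neg, mul_one] at h3
  apply h3.congr_of_eventuallyEq
  filter_upwards [eventually_lt_nhds h] with x hx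
  rw [abs_of_neg (by linarith : x - a < 0), neg_sub]; rfl

/-- with all ballots at `m` except voter `i`'s ballot `t ∈ (m, M]`, the
unique minimizer of the weighted `p`-th power loss is
`m + (t - m) / (1 + ((∑_{j≠i} w j)/w i)^(1/(p-1)))`, which lies strictly between `m`
and `t`. -/
theorem weighted_power_loss_one_high_ballot
    (m M : ℝ) (hmM : m < M) (n : ℕ) (hn : 2 ≤ n) (i : Fin n) (p : ℝ) (hp : 1 < p)
    (w : Fin n → ℝ) (hw : ∀ j, 0 ≤ w j) (hwi : 0 < w i)
    (hwrest : 0 < ∑ j ∈ Finset.univ.erase i, w j)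
    (t : ℝ) (ht : t ∈ Set.Ioc m M) :
    let s : Fin n → ℝ := fun j => if j = i then t else m
    let f : ℝ → ℝ := fun x => ∑ j, w j * |x - s j| ^ p
    let sstar : ℝ := m + (t - m) *
      (1 + ((∑ j ∈ Finset.univ.erase i, w j) / w i) ^ (1 / (p - 1)))⁻¹
    (∀ y : ℝ, f sstar ≤ f y) ∧ (∀ x : ℝ, (∀ y : ℝ, f x ≤ f y) → x = sstar) ∧
    m < sstar ∧ sstar < t := by
  intro s f sstar
  set W : ℝ := ∑ j ∈ Finset.univ.erase i, w j with hW
  set c : ℝ := w i with hc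
  have hd : 0 < t - m := sub_pos.mpr ht.1
  set r : ℝ := (W / c) ^ (1 / (p - 1)) with hr
  have hr0 : 0 < r := Real.rpow_pos_of_pos (div_pos hwrest hwi) _
  have h1r : (0:ℝ) < 1 + r := by linarith
  have hinv1 : (1 + r)⁻¹ < 1 := by
    rw [inv_lt_one₀ h1r]; linarith
  have hinv0 : 0 < (1 + r)⁻¹ := inv_pos.mpr h1r
  have hsm : m < sstar := by
    have : 0 < (t - m) * (1 + r)⁻¹ := mul_pos hd hinv0
    simp only [sstar]; linarith
  have hst : sstar < t := by
    have : (t - m) * (1 + r)⁻¹ < (t - m) * 1 := by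
      exact (mul_lt_mul_iff_right₀ hd).mpr hinv1
    simp only [sstar]; linarith
  -- rewrite f as a two-term function
  have hfg : ∀ x, f x = c * |x - t| ^ p + W * |x - m| ^ p := by
    intro x
    simp only [f, s]
    rw [← Finset.add_sum_erase _ _ (Finset.mem_univ i)]
    congr 1
    · simp [hc]
    · rw [hW, Finset.sum_mul]
      apply Finset.sum_congr rfl
      intro j hj
      rw [if_neg (Finset.mem_erase.mp hj).1]
  -- convexity
  have hg : StrictConvexOn ℝ Set.univ (fun x => c * |x - t| ^ p + W * |x - m| ^ p) :=
    (aux_const_mul_strictConvexOn hwi (aux_strictConvexOn_abs_rpow t hp)).add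
      (aux_const_mul_strictConvexOn hwrest (aux_strictConvexOn_abs_rpow m hp))
  have hfconv : StrictConvexOn ℝ Set.univ f :=
    hg.congr (fun x _ => (hfg x).symm)
  -- derivative at sstar is zero
  have hrp : r ^ (p - 1) = W / c := by
    rw [hr, ← Real.rpow_mul (le_of_lt (div_pos hwrest hwi)),
      one_div, inv_mul_cancel₀ (by linarith : p - 1 ≠ 0), Real.rpow_one]
  have hsstar : sstar = m + (t - m) * (1 + r)⁻¹ := rfl
  have hbal : W * (sstar - m) ^ (p - 1) = c * (t - sstar) ^ (p - 1) := by
    have e1 : sstar - m = (t - m) * (1 + r)⁻¹ := by rw [hsstar]; ring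
    have e2 : t - sstar = (t - m) * (1 + r)⁻¹ * r := by
      rw [hsstar]
      field_simp
      ring
    rw [e1, e2, Real.mul_rpow (by positivity) hr0.le, hrp]
    field_simp
  have hderiv : HasDerivAt f 0 sstar := by
    have h1 : HasDerivAt (fun x : ℝ => |x - t| ^ p) (-(p * (t - sstar) ^ (p - 1))) sstar :=
      aux_hasDerivAt_left t sstar hp hst
    have h2 : HasDerivAt (fun x : ℝ => |x - m| ^ p) (p * (sstar - m) ^ (p - 1)) sstar :=
      aux_hasDerivAt_right m sstar hp hsm
    have h3 := (h1.const_mul c).add (h2.const_mul W)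
    have h4 : c * -(p * (t - sstar) ^ (p - 1)) + W * (p * (sstar - m) ^ (p - 1)) = 0 := by
      nlinarith [hbal]
    rw [h4] at h3
    exact (h3.congr_of_eventuallyEq (by filter_upwards with x; rw [hfg x]; rfl))
  -- minimality
  have hmin : ∀ y : ℝ, f sstar ≤ f y := by
    intro y
    rcases lt_trichotomy y sstar with hy | hy | hy
    · have := hfconv.convexOn.slope_le_of_hasDerivAt (Set.mem_univ y)
        (Set.mem_univ sstar) hy hderiv
      rw [slope_def_field] at this
      have hne : sstar - y > 0 := by linarith
      rcases div_nonpos_iff.mp this with ⟨h1, h2⟩ | ⟨h1, h2⟩ <;> linarith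
    · rw [hy]
    · have := hfconv.convexOn.le_slope_of_hasDerivAt (Set.mem_univ sstar)
        (Set.mem_univ y) hy hderiv
      rw [slope_def_field] at this
      have hne : y - sstar > 0 := by linarith
      rcases div_nonneg_iff.mp this with ⟨h1, h2⟩ | ⟨h1, h2⟩ <;> linarith
  refine ⟨hmin, ?_, hsm, hst⟩
  intro x hx
  by_contra hne
  have hfx : f x = f sstar := le_antisymm (hx sstar) (hmin x)
  have hmid := hfconv.2 (Set.mem_univ x) (Set.mem_univ sstar) hne
    (by norm_num : (0:ℝ) < 1/2) (by norm_num : (0:ℝ) < 1/2) (by norm_num)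
  simp only [smul_eq_mul, hfx] at hmid
  have : f ((1/2) * x + (1/2) * sstar) < f sstar := by linarith
  exact absurd (hmin _) (not_le.mpr this)
end

section
/- Let med denote the median of 2n+1 real numbers (the (n+1)-st order statistic). For any reals r_1, …, r_n and any weakly increasing phantoms α_0 ≤ α_1 ≤ … ≤ α_n, the rule φ(r) = med(r_1, …, r_n, α_0, …, α_n) is strategy-proof: for every voter i and profiles r, s differing only in coordinate i, either φ(s) ≥ φ(r) ≥ r_i or φ(s) ≤ φ(r) ≤ r_i. -/
/-- Moulin's phantom median rule: the median of the `n` ballots and `n+1` phantoms. -/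
noncomputable def phantomMedian (n : ℕ) (α : Fin (n + 1) → ℝ) (r : Fin n → ℝ) : ℝ :=
  medOdd n (List.ofFn r ++ List.ofFn α)

/-- Median of a multiset (as `n`-th entry of the sorted list). -/
noncomputable def mMed (n : ℕ) (m : Multiset ℝ) : ℝ := (m.sort (· ≤ ·)).getD n 0

lemma sorted_getD_iff {l : List ℝ} (hs : l.Pairwise (· ≤ ·)) {k : ℕ} (hk : k < l.length)
    (p : ℝ → Prop) [DecidablePred p] (hp : ∀ x y : ℝ, x ≤ y → p y → p x) :
    p (l.getD k 0) ↔ k + 1 ≤ l.countP (fun x => decide (p x)) := by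
  rw [List.getD_eq_getElem l 0 hk]
  constructor
  · intro h
    have h2 : (l.take (k+1)).countP (fun x => decide (p x)) = (l.take (k+1)).length := by
      rw [List.countP_eq_length]
      intro x hx
      rcases List.mem_take_iff_getElem.1 hx with ⟨j, hj, rfl⟩
      simp only [decide_eq_true_iff]
      refine hp _ _ ?_ h
      have := hs.rel_get_of_le (a := ⟨j, by simp at hj; omega⟩) (b := ⟨k, hk⟩)
        (by simp only [Fin.mk_le_mk]; simp at hj; omega)
      simpa using this
    have h3 : l.countP (fun x => decide (p x)) =
        (l.take (k+1)).countP (fun x => decide (p x))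
        + (l.drop (k+1)).countP (fun x => decide (p x)) := by
      conv_lhs => rw [← List.take_append_drop (k+1) l]
      exact List.countP_append
    have h4 : (l.take (k+1)).length = k+1 := by
      rw [List.length_take]; omega
    omega
  · intro h
    by_contra hc
    have h0 : (l.drop k).countP (fun x => decide (p x)) = 0 := by
      rw [List.countP_eq_zero]
      intro x hx
      rcases List.mem_drop_iff_getElem.1 hx with ⟨j, hj, rfl⟩
      simp only [decide_eq_true_iff]
      intro hpx
      refine hc (hp _ _ ?_ hpx)
      have := hs.rel_get_of_le (a := ⟨k, hk⟩) (b := ⟨k + j, by omega⟩)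
        (by simp only [Fin.mk_le_mk]; omega)
      simpa using this
    have h3 : l.countP (fun x => decide (p x)) =
        (l.take k).countP (fun x => decide (p x))
        + (l.drop k).countP (fun x => decide (p x)) := by
      conv_lhs => rw [← List.take_append_drop k l]
      exact List.countP_append
    have h4 : (l.take k).countP (fun x => decide (p x)) ≤ k := by
      calc _ ≤ (l.take k).length := List.countP_le_length
      _ ≤ k := by rw [List.length_take]; omega
    omega

lemma mMed_le_iff {n : ℕ} {m : Multiset ℝ} (hm : Multiset.card m = 2*n+1) (t : ℝ) :
    mMed n m ≤ t ↔ n + 1 ≤ m.countP (fun x => x ≤ t) := by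
  have hs := Multiset.pairwise_sort (α := ℝ) m (· ≤ ·)
  have hlen : (m.sort (· ≤ ·)).length = 2*n+1 := by rw [Multiset.length_sort, hm]
  have key := sorted_getD_iff hs (k := n) (by omega) (fun x => x ≤ t)
    (fun x y hxy h => hxy.trans h)
  beta_reduce at key
  rw [mMed, key]
  conv_rhs => rw [show m = ↑(m.sort (· ≤ ·)) from (Multiset.sort_eq _ _).symm,
    Multiset.coe_countP]

lemma lt_mMed_iff {n : ℕ} {m : Multiset ℝ} (hm : Multiset.card m = 2*n+1) (t : ℝ) :
    mMed n m < t ↔ n + 1 ≤ m.countP (fun x => x < t) := by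
  have hs := Multiset.pairwise_sort (α := ℝ) m (· ≤ ·)
  have hlen : (m.sort (· ≤ ·)).length = 2*n+1 := by rw [Multiset.length_sort, hm]
  have key := sorted_getD_iff hs (k := n) (by omega) (fun x => x < t)
    (fun x y hxy h => lt_of_le_of_lt hxy h)
  beta_reduce at key
  rw [mMed, key]
  conv_rhs => rw [show m = ↑(m.sort (· ≤ ·)) from (Multiset.sort_eq _ _).symm,
    Multiset.coe_countP]

lemma le_mMed_iff {n : ℕ} {m : Multiset ℝ} (hm : Multiset.card m = 2*n+1) (t : ℝ) :
    t ≤ mMed n m ↔ n + 1 ≤ m.countP (fun x => t ≤ x) := by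
  have h1 : Multiset.card m = m.countP (fun x => x < t) + m.countP (fun x => ¬ x < t) :=
    Multiset.card_eq_countP_add_countP _ _
  have h2 : m.countP (fun x => ¬ x < t) = m.countP (fun x => t ≤ x) := by
    apply Multiset.countP_congr rfl
    intro x _
    simp [not_lt]
  have h3 := lt_mMed_iff hm t
  constructor
  · intro h
    have : ¬ mMed n m < t := not_lt.2 h
    rw [h3] at this
    omega
  · intro h
    rw [← not_lt, h3]
    omega

lemma mMed_cons_mono {n : ℕ} {M : Multiset ℝ} (hM : Multiset.card M = 2*n) {a b : ℝ}
    (hab : a ≤ b) : mMed n (a ::ₘ M) ≤ mMed n (b ::ₘ M) := by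
  have hca : Multiset.card (a ::ₘ M) = 2*n+1 := by simp [hM]
  have hcb : Multiset.card (b ::ₘ M) = 2*n+1 := by simp [hM]
  set t := mMed n (b ::ₘ M) with ht
  have h := (mMed_le_iff hcb t).1 le_rfl
  rw [mMed_le_iff hca]
  rw [Multiset.countP_cons] at h ⊢
  by_cases hbt : b ≤ t
  · rw [if_pos (hab.trans hbt)]
    rw [if_pos hbt] at h
    omega
  · rw [if_neg hbt] at h
    split_ifs <;> omega

lemma mMed_pin_above {n : ℕ} {M : Multiset ℝ} (hM : Multiset.card M = 2*n) {a : ℝ}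
    (ha : a < mMed n (a ::ₘ M)) (b : ℝ) : mMed n (a ::ₘ M) ≤ mMed n (b ::ₘ M) := by
  have hca : Multiset.card (a ::ₘ M) = 2*n+1 := by simp [hM]
  have hcb : Multiset.card (b ::ₘ M) = 2*n+1 := by simp [hM]
  set t := mMed n (a ::ₘ M) with ht
  have h := (le_mMed_iff hca t).1 le_rfl
  rw [Multiset.countP_cons, if_neg (not_le.2 ha)] at h
  rw [le_mMed_iff hcb, Multiset.countP_cons]
  split_ifs <;> omega

lemma mMed_pin_below {n : ℕ} {M : Multiset ℝ} (hM : Multiset.card M = 2*n) {a : ℝ}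
    (ha : mMed n (a ::ₘ M) < a) (b : ℝ) : mMed n (b ::ₘ M) ≤ mMed n (a ::ₘ M) := by
  have hca : Multiset.card (a ::ₘ M) = 2*n+1 := by simp [hM]
  have hcb : Multiset.card (b ::ₘ M) = 2*n+1 := by simp [hM]
  set t := mMed n (a ::ₘ M) with ht
  have h := (mMed_le_iff hca t).1 le_rfl
  rw [Multiset.countP_cons, if_neg (not_le.2 ha)] at h
  rw [mMed_le_iff hcb, Multiset.countP_cons]
  split_ifs <;> omega

lemma phantomMedian_eq_mMed (n : ℕ) (α : Fin (n + 1) → ℝ) (r : Fin n → ℝ) :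
    phantomMedian n α r = mMed n ↑(List.ofFn r ++ List.ofFn α) := rfl

/-- Moulin's phantom median rule with weakly increasing phantoms is
strategy-proof. -/
theorem phantomMedian_strategyProof (n : ℕ) (α : Fin (n + 1) → ℝ) (hα : Monotone α) :
    ∀ r s : Fin n → ℝ, ∀ i : Fin n, (∀ j, j ≠ i → s j = r j) →
      (phantomMedian n α s ≥ phantomMedian n α r ∧ phantomMedian n α r ≥ r i) ∨
      (phantomMedian n α s ≤ phantomMedian n α r ∧ phantomMedian n α r ≤ r i) := by
  intro r s i hdiff
  -- decompose the profile multiset as `r i ::ₘ` a common rest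
  set U : Multiset (Fin n) := ↑(List.finRange n) with hU
  have hiU : i ∈ U := by simp [hU, List.mem_finRange]
  set T : Multiset (Fin n) := U.erase i with hT
  have hUnodup : U.Nodup := by
    rw [hU]; exact (List.nodup_finRange n)
  have hcons : i ::ₘ T = U := Multiset.cons_erase hiU
  have hcardU : Multiset.card U = n := by simp [hU]
  have hcardT : Multiset.card T = n - 1 := by
    rw [hT, Multiset.card_erase_of_mem hiU, hcardU]; rfl
  have hofFn : ∀ f : Fin n → ℝ, (↑(List.ofFn f) : Multiset ℝ) = f i ::ₘ Multiset.map f T := by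
    intro f
    rw [List.ofFn_eq_map, ← Multiset.map_coe, ← hU, ← hcons, Multiset.map_cons]
  have hmapeq : Multiset.map s T = Multiset.map r T := by
    apply Multiset.map_congr rfl
    intro j hj
    refine hdiff j ?_
    exact (hUnodup.mem_erase_iff.1 (hT ▸ hj)).1
  set M : Multiset ℝ := Multiset.map r T + ↑(List.ofFn α) with hMdef
  have hpos : 0 < n := i.pos
  have hcardM : Multiset.card M = 2*n := by
    rw [hMdef, Multiset.card_add, Multiset.card_map, hcardT]
    simp only [Multiset.coe_card, List.length_ofFn]
    omega
  have hr : phantomMedian n α r = mMed n (r i ::ₘ M) := by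
    rw [phantomMedian_eq_mMed]
    congr 1
    rw [show ((List.ofFn r ++ List.ofFn α : List ℝ) : Multiset ℝ)
        = ↑(List.ofFn r) + ↑(List.ofFn α) from rfl, hofFn r, hMdef, Multiset.cons_add]
  have hs2 : phantomMedian n α s = mMed n (s i ::ₘ M) := by
    rw [phantomMedian_eq_mMed]
    congr 1
    rw [show ((List.ofFn s ++ List.ofFn α : List ℝ) : Multiset ℝ)
        = ↑(List.ofFn s) + ↑(List.ofFn α) from rfl, hofFn s, hMdef, ← hmapeq, Multiset.cons_add]
  rcases lt_trichotomy (r i) (mMed n (r i ::ₘ M)) with h | h | h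
  · left
    constructor
    · rw [hr, hs2]; exact mMed_pin_above hcardM h (s i)
    · rw [hr]; exact le_of_lt h
  · rcases le_total (r i) (s i) with hab | hab
    · left
      exact ⟨by rw [hr, hs2]; exact mMed_cons_mono hcardM hab, by rw [hr, ← h]⟩
    · right
      exact ⟨by rw [hr, hs2]; exact mMed_cons_mono hcardM hab, by rw [hr, ← h]⟩
  · right
    constructor
    · rw [hr, hs2]; exact mMed_pin_below hcardM h (s i)
    · rw [hr]; exact le_of_lt h
end
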